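/- Let X and Z be n × M real matrices with ZᵀX invertible, and define the just-identified instrumental-variables estimator β̂_IV(y) = (ZᵀX)⁻¹ Zᵀ y. Let K ≥ 2, r : Fin n → Fin K, l̃ : Fin K → ℝ, r̃ i = l̃ (r i), and d_k i = 1 if r i ≤ k else 0. Then β̂_IV(r̃) = (∑_{k=0}^{K−2} (l̃ k − l̃ (k+1)) · β̂_IV(d_k)) + l̃ (K−1) · (ZᵀX)⁻¹ Zᵀ 𝟙. Moreover, if the 0-th column of X is the all-ones vector (X e₀ = 𝟙), then (ZᵀX)⁻¹ Zᵀ 𝟙 = e₀, so for every m ≠ 0 we have β̂_IV(r̃)_m = ∑_{k=0}^{K−2} (l̃ k − l̃ (k+1)) · β̂_IV(d_k)_m. -/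

import Mathlib

open Matrix

/-- The just-identified instrumental-variables estimator `β̂_IV(y) = (ZᵀX)⁻¹ Zᵀ y`. -/
noncomputable def ivCoef {n M : ℕ} (Z X : Matrix (Fin n) (Fin M) ℝ) (y : Fin n → ℝ) :
    Fin M → ℝ :=
  (Zᵀ * X)⁻¹ *ᵥ (Zᵀ *ᵥ y)

lemma tele_aux (f : ℕ → ℝ) : ∀ N, ∀ j ≤ N,
    ∑ k ∈ Finset.range N, (f k - f (k+1)) * (if j ≤ k then 1 else 0) = f j - f N := by
  intro N
  induction N with
  | zero => intro j hj; interval_cases j; simp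
  | succ N ih =>
    intro j hj
    rw [Finset.sum_range_succ]
    rcases Nat.lt_or_ge j (N+1) with h | h
    · have hjN : j ≤ N := by omega
      rw [ih j hjN, if_pos hjN]; ring
    · have hj1 : j = N + 1 := by omega
      subst hj1
      rw [if_neg (by omega)]
      have hz : ∀ k ∈ Finset.range N, (f k - f (k+1)) * (if N+1 ≤ k then 1 else 0) = 0 := by
        intro k hk; rw [if_neg (by simp at hk; omega)]; ring
      rw [Finset.sum_congr rfl hz]; simp

lemma tele_fin (K : ℕ) (hK : 2 ≤ K) (l : Fin K → ℝ) (j : Fin K) :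
    ∑ k : Fin (K - 1),
      (l (Fin.castLE (Nat.sub_le K 1) k) - l (Fin.cast (Nat.sub_add_cancel (by omega : 1 ≤ K)) k.succ)) *
        (if (j : ℕ) ≤ (k : ℕ) then (1 : ℝ) else 0)
      = l j - l ⟨K - 1, Nat.sub_lt (by omega) Nat.one_pos⟩ := by
  set F : ℕ → ℝ := fun k => if h : k < K then l ⟨k, h⟩ else 0 with hF
  have hcast : ∀ k : Fin (K-1),
      l (Fin.castLE (Nat.sub_le K 1) k) = F (k : ℕ) ∧
      l (Fin.cast (Nat.sub_add_cancel (by omega : 1 ≤ K)) k.succ) = F ((k : ℕ) + 1) := by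
    intro k
    constructor
    · simp only [hF]; rw [dif_pos (by omega : (k : ℕ) < K)]; rfl
    · simp only [hF]; rw [dif_pos (by omega : (k : ℕ) + 1 < K)]; rfl
  have key := tele_aux F (K-1) (j : ℕ) (by omega)
  have h1 : F (j : ℕ) = l j := by simp only [hF]; rw [dif_pos j.isLt]
  have h2 : F (K-1) = l ⟨K-1, Nat.sub_lt (by omega) Nat.one_pos⟩ := by
    simp only [hF]; rw [dif_pos (Nat.sub_lt (by omega) Nat.one_pos)]
  calc ∑ k : Fin (K - 1),
        (l (Fin.castLE (Nat.sub_le K 1) k) - l (Fin.cast (Nat.sub_add_cancel (by omega : 1 ≤ K)) k.succ)) *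
          (if (j : ℕ) ≤ (k : ℕ) then (1 : ℝ) else 0)
      = ∑ k : Fin (K - 1), (F (k : ℕ) - F ((k : ℕ)+1)) * (if (j : ℕ) ≤ (k : ℕ) then (1:ℝ) else 0) := by
        refine Finset.sum_congr rfl fun k _ => ?_
        rw [(hcast k).1, (hcast k).2]
    _ = ∑ k ∈ Finset.range (K-1), (F k - F (k+1)) * (if (j : ℕ) ≤ k then (1:ℝ) else 0) :=
        Fin.sum_univ_eq_sum_range (fun k => (F k - F (k+1)) * (if (j : ℕ) ≤ k then (1:ℝ) else 0)) (K-1)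
    _ = l j - l ⟨K-1, Nat.sub_lt (by omega) Nat.one_pos⟩ := by rw [key, h1, h2]

/-- Decomposition of the IV coefficient vector of the transformed
outcome into a weighted sum of IV coefficients of the dichotomizations plus a
constant term; moreover, if the 0-th column of `X` is the all-ones vector, the
constant term is the standard basis vector `e₀`, so all coefficients with index
`m ≠ 0` are purely the weighted sums. -/
theorem stmt_5 (n M K : ℕ) [NeZero M] (hK : 2 ≤ K)
    (Z X : Matrix (Fin n) (Fin M) ℝ) (hZX : IsUnit (Zᵀ * X))
    (r : Fin n → Fin K) (l : Fin K → ℝ) :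
    (ivCoef Z X (fun i => l (r i)) =
      (∑ k : Fin (K - 1),
        (l (Fin.castLE (by omega) k) - l (Fin.cast (by omega) k.succ)) •
          ivCoef Z X (fun i => if (r i : ℕ) ≤ (k : ℕ) then (1 : ℝ) else 0)) +
      l ⟨K - 1, by omega⟩ • ((Zᵀ * X)⁻¹ *ᵥ (Zᵀ *ᵥ fun _ => (1 : ℝ)))) ∧
    (X *ᵥ Pi.single (0 : Fin M) 1 = (fun _ => (1 : ℝ)) →
      ((Zᵀ * X)⁻¹ *ᵥ (Zᵀ *ᵥ fun _ => (1 : ℝ))) = Pi.single (0 : Fin M) 1 ∧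
      ∀ m : Fin M, m ≠ 0 →
        ivCoef Z X (fun i => l (r i)) m =
          ∑ k : Fin (K - 1),
            (l (Fin.castLE (by omega) k) - l (Fin.cast (by omega) k.succ)) *
              ivCoef Z X (fun i => if (r i : ℕ) ≤ (k : ℕ) then (1 : ℝ) else 0) m) := by
  -- the pointwise vector identity
  have hvec : (fun i => l (r i)) =
      (∑ k : Fin (K - 1),
        (l (Fin.castLE (by omega) k) - l (Fin.cast (by omega) k.succ)) •
          (fun i => if (r i : ℕ) ≤ (k : ℕ) then (1 : ℝ) else 0)) +
      l ⟨K - 1, by omega⟩ • (fun _ : Fin n => (1 : ℝ)) := by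
    funext i
    simp only [Pi.add_apply, Pi.smul_apply, Finset.sum_apply, smul_eq_mul, mul_one]
    rw [tele_fin K hK l (r i)]
    ring
  have hmain : ivCoef Z X (fun i => l (r i)) =
      (∑ k : Fin (K - 1),
        (l (Fin.castLE (by omega) k) - l (Fin.cast (by omega) k.succ)) •
          ivCoef Z X (fun i => if (r i : ℕ) ≤ (k : ℕ) then (1 : ℝ) else 0)) +
      l ⟨K - 1, by omega⟩ • ((Zᵀ * X)⁻¹ *ᵥ (Zᵀ *ᵥ fun _ => (1 : ℝ))) := by
    have h0 : ∀ y : Fin n → ℝ, ivCoef Z X y = ((Zᵀ * X)⁻¹ * Zᵀ) *ᵥ y := by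
      intro y; rw [ivCoef, mulVec_mulVec]
    rw [h0, hvec, mulVec_add, mulVec_smul]
    congr 1
    · rw [← mulVecLin_apply, map_sum]
      refine Finset.sum_congr rfl fun k _ => ?_
      rw [mulVecLin_apply, mulVec_smul, h0]
    · rw [mulVec_mulVec]
  refine ⟨hmain, fun hX => ?_⟩
  have hdet : IsUnit (Zᵀ * X).det := (Matrix.isUnit_iff_isUnit_det _).mp hZX
  have hinv : (Zᵀ * X)⁻¹ * (Zᵀ * X) = 1 := Matrix.nonsing_inv_mul _ hdet
  have hone : ((Zᵀ * X)⁻¹ *ᵥ (Zᵀ *ᵥ fun _ => (1 : ℝ))) = Pi.single (0 : Fin M) 1 := by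
    rw [← hX, mulVec_mulVec, mulVec_mulVec, Matrix.mul_assoc, hinv, Matrix.one_mulVec]
  refine ⟨hone, fun m hm => ?_⟩
  have := congrFun hmain m
  rw [hone] at this
  simp only [Pi.add_apply, Finset.sum_apply, Pi.smul_apply, smul_eq_mul,
    Pi.single_eq_of_ne hm, mul_zero, add_zero] at this
  exact this
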